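/- arXiv:1505.01889 — 4 statements merged into one kernel-verified Lean document; each statement's English description precedes it below -/
import Mathlib

section
/- Let T be a tree on n ≥ 4 vertices with two centroids, let e₁ be the edge connecting the two centroids, and let e_i ≠ e_j be two other edges. If e_i and e_j lie in the same connected component of T − e₁, then θ_T({e₁, e_i, e_j}) has exactly one part equal to n/2 (and the other three parts strictly less than n/2); if e_i and e_j lie in different components of T − e₁, then all four parts of θ_T({e₁, e_i, e_j}) are strictly less than n/2. -/
open SimpleGraph

/-- The multiset of connected component sizes of a graph on a finite vertex type. -/
noncomputable def compSizes {V : Type*} [Fintype V] (G : SimpleGraph V) : Multiset ℕ :=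
  haveI : Fintype G.ConnectedComponent := Fintype.ofFinite _
  (Finset.univ : Finset G.ConnectedComponent).val.map fun c => Nat.card c.supp

/-- θ_T(S): the multiset of component sizes of T with the edges in S deleted. -/
noncomputable def theta {V : Type*} [Fintype V] (T : SimpleGraph V) (S : Finset (Sym2 V)) :
    Multiset ℕ :=
  compSizes (T.deleteEdges ↑S)

/-- The weight of a vertex: the maximal size of a connected component of T − v. -/
noncomputable def vertexWeight {V : Type*} [Fintype V] (G : SimpleGraph V) (v : V) : ℕ :=
  haveI : Fintype ((G.induce ({v}ᶜ : Set V)).ConnectedComponent) := Fintype.ofFinite _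
  (Finset.univ : Finset ((G.induce ({v}ᶜ : Set V)).ConnectedComponent)).sup
    fun c => Nat.card c.supp

/-- A centroid is a vertex of minimum weight. -/
def IsCentroid {V : Type*} [Fintype V] (G : SimpleGraph V) (c : V) : Prop :=
  ∀ u : V, vertexWeight G c ≤ vertexWeight G u

set_option linter.unusedSectionVars false

namespace Stmt7Aux

variable {V : Type*} [Fintype V] [DecidableEq V] {T : SimpleGraph V}


variable {V : Type*} [Fintype V] [DecidableEq V] {T : SimpleGraph V}

lemma sym2_nonempty (e : Sym2 V) : ∃ u, u ∈ e := by
  induction e using Sym2.ind with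
  | _ a b => exact ⟨a, Sym2.mem_mk_left a b⟩

lemma not_reachable_delete (hT : T.IsAcyclic) {a b : V} (hab : T.Adj a b) :
    ¬ (T.deleteEdges {s(a, b)}).Reachable a b := by
  have hb := (isAcyclic_iff_forall_adj_isBridge.mp hT) hab
  rw [isBridge_iff] at hb
  exact hb

lemma walk_delete_cases {a b : V} {u v : V} (w : T.Walk u v) :
    (T.deleteEdges {s(a, b)}).Reachable u v ∨
      ((T.deleteEdges {s(a, b)}).Reachable u a ∧ (T.deleteEdges {s(a, b)}).Reachable v b) ∨
      ((T.deleteEdges {s(a, b)}).Reachable u b ∧ (T.deleteEdges {s(a, b)}).Reachable v a) := by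
  induction w with
  | nil => exact Or.inl (Reachable.refl _)
  | @cons x z y hxz p ih =>
    by_cases he : s(x, z) = s(a, b)
    · rw [Sym2.eq_iff] at he
      rcases ih with h | ⟨h1, h2⟩ | ⟨h1, h2⟩
      · rcases he with ⟨rfl, rfl⟩ | ⟨rfl, rfl⟩
        · exact Or.inr (Or.inl ⟨Reachable.refl _, h.symm⟩)
        · exact Or.inr (Or.inr ⟨Reachable.refl _, h.symm⟩)
      · rcases he with ⟨rfl, rfl⟩ | ⟨rfl, rfl⟩
        · exact Or.inr (Or.inl ⟨Reachable.refl _, h2⟩)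
        · exact Or.inl h2.symm
      · rcases he with ⟨rfl, rfl⟩ | ⟨rfl, rfl⟩
        · exact Or.inl h2.symm
        · exact Or.inr (Or.inr ⟨Reachable.refl _, h2⟩)
    · have hadj : (T.deleteEdges {s(a, b)}).Adj x z := by
        rw [deleteEdges_adj]
        exact ⟨hxz, by simpa using he⟩
      rcases ih with h | ⟨h1, h2⟩ | ⟨h1, h2⟩
      · exact Or.inl (hadj.reachable.trans h)
      · exact Or.inr (Or.inl ⟨hadj.reachable.trans h1, h2⟩)
      · exact Or.inr (Or.inr ⟨hadj.reachable.trans h1, h2⟩)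

lemma reachable_endpoint (hc : T.Preconnected) (a b v : V) :
    (T.deleteEdges {s(a, b)}).Reachable v a ∨ (T.deleteEdges {s(a, b)}).Reachable v b := by
  obtain ⟨w⟩ := hc v a
  rcases walk_delete_cases w with h | ⟨h1, _⟩ | ⟨h1, _⟩
  · exact Or.inl h
  · exact Or.inl h1
  · exact Or.inr h1

lemma two_comps (hc : T.Preconnected) (a b : V)
    (c : (T.deleteEdges {s(a, b)}).ConnectedComponent) :
    c = (T.deleteEdges {s(a, b)}).connectedComponentMk a ∨
      c = (T.deleteEdges {s(a, b)}).connectedComponentMk b := by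
  induction c using SimpleGraph.ConnectedComponent.ind with
  | _ v =>
    rcases reachable_endpoint hc a b v with h | h
    · exact Or.inl (ConnectedComponent.sound h)
    · exact Or.inr (ConnectedComponent.sound h)

lemma supp_mono {G H : SimpleGraph V} (hGH : G ≤ H) (v : V) :
    (G.connectedComponentMk v).supp ⊆ (H.connectedComponentMk v).supp := by
  intro u hu
  rw [ConnectedComponent.mem_supp_iff, ConnectedComponent.eq] at hu ⊢
  exact hu.mono hGH

lemma supp_subset_of_mem_support {G : SimpleGraph V} {v w : V} (p : G.Walk v w) {z : V}
    (hz : z ∈ p.support) : z ∈ (G.connectedComponentMk v).supp := by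
  rw [ConnectedComponent.mem_supp_iff, ConnectedComponent.eq]
  exact Reachable.symm ⟨p.takeUntil z hz⟩

lemma reach_toDelete {G : SimpleGraph V} {S : Set (Sym2 V)} {u v : V} (h : G.Reachable u v)
    (hS : ∀ e ∈ S, ∀ x ∈ e, ¬ G.Reachable u x) :
    (G.deleteEdges S).Reachable u v := by
  obtain ⟨p⟩ := h
  refine ⟨p.toDeleteEdges S ?_⟩
  intro e he hmem
  revert he hmem
  induction e using Sym2.ind with
  | _ x y =>
    intro he hmem
    exact hS _ hmem x (Sym2.mem_mk_left x y)
      ⟨p.takeUntil x (p.fst_mem_support_of_mem_edges he)⟩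

lemma induce_reach {G H : SimpleGraph V} (hGH : G ≤ H) {s : Set V} :
    ∀ {x y : V} (p : G.Walk x y), (∀ z ∈ p.support, z ∈ s) → ∀ (hx : x ∈ s) (hy : y ∈ s),
      (H.induce s).Reachable ⟨x, hx⟩ ⟨y, hy⟩ := by
  intro x y p
  induction p with
  | nil => intro _ hx hy; exact Reachable.refl _
  | @cons u w _ huw p ih =>
    intro hs hx hy
    have hw : w ∈ s := hs w (by simp)
    have hadj : (H.induce s).Adj ⟨u, hx⟩ ⟨w, hw⟩ := by
      simp only [comap_adj, Function.Embedding.coe_subtype]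
      exact hGH huw
    exact hadj.reachable.trans (ih (fun z hz => hs z (by simp [hz])) hw hy)

lemma induce_reach_delete {G : SimpleGraph V} {a : V} {e : Sym2 V} (hae : a ∈ e) :
    ∀ {x y : ↥({a}ᶜ : Set V)} (_ : (G.induce ({a}ᶜ : Set V)).Walk x y),
      (G.deleteEdges {e}).Reachable ↑x ↑y := by
  intro x y p
  induction p with
  | nil => exact Reachable.refl _
  | @cons u w _ huw p ih =>
    have h1 : G.Adj ↑u ↑w := huw
    have h2 : s((u : V), (w : V)) ≠ e := by
      intro hcontra
      rw [← hcontra, Sym2.mem_iff] at hae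
      rcases hae with h | h
      · exact u.2 h.symm
      · exact w.2 h.symm
    have hadj : (G.deleteEdges {e}).Adj ↑u ↑w := by
      rw [deleteEdges_adj]
      exact ⟨h1, by simpa using h2⟩
    exact hadj.reachable.trans ih


lemma weight_ge (hT : T.IsAcyclic) {a b : V} (hab : T.Adj a b) :
    Nat.card ((T.deleteEdges {s(a, b)}).connectedComponentMk b).supp ≤ vertexWeight T a := by
  classical
  letI : Fintype ((T.induce ({a}ᶜ : Set V)).ConnectedComponent) := Fintype.ofFinite _
  have haB : a ∉ ((T.deleteEdges {s(a, b)}).connectedComponentMk b).supp := by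
    rw [ConnectedComponent.mem_supp_iff, ConnectedComponent.eq]
    exact fun h => not_reachable_delete hT hab h
  have hbmem : b ∈ ({a}ᶜ : Set V) := by simp [hab.ne']
  have hmap : ∀ v, v ∈ ((T.deleteEdges {s(a, b)}).connectedComponentMk b).supp →
      ∀ (hv : v ∈ ({a}ᶜ : Set V)),
      (⟨v, hv⟩ : ↥({a}ᶜ : Set V)) ∈
        ((T.induce ({a}ᶜ : Set V)).connectedComponentMk ⟨b, hbmem⟩).supp := by
    intro v hv hv'
    rw [ConnectedComponent.mem_supp_iff, ConnectedComponent.eq]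
    have hr : (T.deleteEdges {s(a, b)}).Reachable v b := by
      rw [ConnectedComponent.mem_supp_iff] at hv
      exact ConnectedComponent.exact hv
    obtain ⟨p⟩ := hr
    refine induce_reach (deleteEdges_le _) p ?_ hv' hbmem
    intro z hz
    have hzB := supp_subset_of_mem_support p hz
    rw [ConnectedComponent.mem_supp_iff] at hv hzB
    rw [hv] at hzB
    intro hza
    rw [Set.mem_singleton_iff] at hza
    subst hza
    exact haB hzB
  have hmem : ∀ v : ((T.deleteEdges {s(a, b)}).connectedComponentMk b).supp,
      (v : V) ∈ ({a}ᶜ : Set V) := by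
    rintro ⟨v, hv⟩
    simp only [Set.mem_compl_iff, Set.mem_singleton_iff]
    rintro rfl
    exact haB hv
  have hinj : Nat.card ((T.deleteEdges {s(a, b)}).connectedComponentMk b).supp ≤
      Nat.card ((T.induce ({a}ᶜ : Set V)).connectedComponentMk ⟨b, hbmem⟩).supp := by
    apply Nat.card_le_card_of_injective
      (fun v : ((T.deleteEdges {s(a, b)}).connectedComponentMk b).supp =>
        (⟨⟨(v : V), hmem v⟩, hmap v v.2 (hmem v)⟩ :
        ((T.induce ({a}ᶜ : Set V)).connectedComponentMk ⟨b, hbmem⟩).supp))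
    intro v w hvw
    apply Subtype.ext
    simpa [Subtype.ext_iff] using hvw
  refine hinj.trans ?_
  unfold vertexWeight
  exact Finset.le_sup (f := fun c : (T.induce ({a}ᶜ : Set V)).ConnectedComponent => Nat.card c.supp) (Finset.mem_univ _)

lemma weight_le (hc : T.Preconnected) {a b : V} (hab : T.Adj a b) :
    vertexWeight T a ≤
      max (Nat.card ((T.deleteEdges {s(a, b)}).connectedComponentMk b).supp)
        (Nat.card ((T.deleteEdges {s(a, b)}).connectedComponentMk a).supp - 1) := by
  classical
  unfold vertexWeight
  apply Finset.sup_le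
  intro c _
  induction c using SimpleGraph.ConnectedComponent.ind with
  | _ r =>
  have hreach : ∀ x : V, ∀ (hx : x ∈ ({a}ᶜ : Set V)),
      (⟨x, hx⟩ : ↥({a}ᶜ : Set V)) ∈
          ((T.induce ({a}ᶜ : Set V)).connectedComponentMk r).supp →
        (T.deleteEdges {s(a, b)}).Reachable x ↑r := by
    intro x hx hmem
    rw [ConnectedComponent.mem_supp_iff] at hmem
    obtain ⟨p⟩ := ConnectedComponent.exact hmem
    exact induce_reach_delete (Sym2.mem_mk_left a b) p
  by_cases hrB : (r : V) ∈ ((T.deleteEdges {s(a, b)}).connectedComponentMk b).supp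
  · refine le_max_of_le_left ?_
    have hmem : ∀ x : ((T.induce ({a}ᶜ : Set V)).connectedComponentMk r).supp,
        ((x : ↥({a}ᶜ : Set V)) : V) ∈
          ((T.deleteEdges {s(a, b)}).connectedComponentMk b).supp := by
      rintro ⟨⟨x, hx⟩, hx2⟩
      have := hreach x hx hx2
      rw [ConnectedComponent.mem_supp_iff] at hrB ⊢
      rw [← hrB]
      exact ConnectedComponent.sound this
    apply Nat.card_le_card_of_injective (fun x => ⟨_, hmem x⟩)
    intro v w hvw
    apply Subtype.ext
    apply Subtype.ext
    simpa [Subtype.ext_iff] using hvw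
  · refine le_max_of_le_right ?_
    have hrA : (r : V) ∈ ((T.deleteEdges {s(a, b)}).connectedComponentMk a).supp := by
      rcases reachable_endpoint hc a b (r : V) with h | h
      · rw [ConnectedComponent.mem_supp_iff]
        exact ConnectedComponent.sound h
      · exact absurd (ConnectedComponent.mem_supp_iff _ _ |>.mpr (ConnectedComponent.sound h))
          hrB
    have hmem : ∀ x : ((T.induce ({a}ᶜ : Set V)).connectedComponentMk r).supp,
        ((x : ↥({a}ᶜ : Set V)) : V) ∈
          ((T.deleteEdges {s(a, b)}).connectedComponentMk a).supp \ {a} := by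
      rintro ⟨⟨x, hx⟩, hx2⟩
      have hr := hreach x hx hx2
      constructor
      · rw [ConnectedComponent.mem_supp_iff] at hrA ⊢
        rw [← hrA]
        exact ConnectedComponent.sound hr
      · simpa using hx
    have h1 : Nat.card ((T.induce ({a}ᶜ : Set V)).connectedComponentMk r).supp ≤
        Nat.card (((T.deleteEdges {s(a, b)}).connectedComponentMk a).supp \ {a} : Set V) := by
      apply Nat.card_le_card_of_injective (fun x => ⟨_, hmem x⟩)
      intro v w hvw
      apply Subtype.ext
      apply Subtype.ext
      simpa [Subtype.ext_iff] using hvw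
    refine h1.trans ?_
    rw [Nat.card_coe_set_eq, Nat.card_coe_set_eq,
      Set.ncard_diff_singleton_of_mem (by rw [ConnectedComponent.mem_supp_iff])]

lemma half_le (hT : T.IsTree) {a b : V} (hab : T.Adj a b) (hcb : IsCentroid T b) :
    Nat.card ((T.deleteEdges {s(a, b)}).connectedComponentMk a).supp ≤
      Nat.card ((T.deleteEdges {s(a, b)}).connectedComponentMk b).supp := by
  have h1 : Nat.card ((T.deleteEdges {s(b, a)}).connectedComponentMk a).supp ≤
      vertexWeight T b := weight_ge hT.IsAcyclic hab.symm
  rw [Sym2.eq_swap] at h1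
  have h2 := hcb a
  have h3 := weight_le hT.isConnected.preconnected hab
  have h4 : 0 < Nat.card ((T.deleteEdges {s(a, b)}).connectedComponentMk a).supp := by
    rw [Nat.card_coe_set_eq, Set.ncard_pos]
    exact ⟨a, by rw [ConnectedComponent.mem_supp_iff]⟩
  have h5 := (h1.trans h2).trans h3
  rcases le_max_iff.mp h5 with h | h
  · exact h
  · omega

lemma halves (hT : T.IsTree) {a b : V} (hadj : T.Adj a b)
    (h₁ : IsCentroid T a) (h₂ : IsCentroid T b) :
    Nat.card ((T.deleteEdges {s(a, b)}).connectedComponentMk a).supp = Fintype.card V / 2 ∧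
      Nat.card ((T.deleteEdges {s(a, b)}).connectedComponentMk b).supp = Fintype.card V / 2 := by
  have hle1 := half_le hT hadj h₂
  have hle2 := half_le hT hadj.symm h₁
  rw [Sym2.eq_swap] at hle2
  have hdisj : Disjoint ((T.deleteEdges {s(a, b)}).connectedComponentMk a).supp
      ((T.deleteEdges {s(a, b)}).connectedComponentMk b).supp := by
    rw [Set.disjoint_left]
    intro v hva hvb
    rw [ConnectedComponent.mem_supp_iff] at hva hvb
    exact not_reachable_delete hT.IsAcyclic hadj
      (ConnectedComponent.exact (hva.symm.trans hvb))
  have hunion : ((T.deleteEdges {s(a, b)}).connectedComponentMk a).supp ∪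
      ((T.deleteEdges {s(a, b)}).connectedComponentMk b).supp = Set.univ := by
    ext v
    simp only [Set.mem_union, Set.mem_univ, iff_true, ConnectedComponent.mem_supp_iff]
    rcases reachable_endpoint hT.isConnected.preconnected a b v with h | h
    · exact Or.inl (ConnectedComponent.sound h)
    · exact Or.inr (ConnectedComponent.sound h)
  have hsum : Nat.card ((T.deleteEdges {s(a, b)}).connectedComponentMk a).supp +
      Nat.card ((T.deleteEdges {s(a, b)}).connectedComponentMk b).supp = Fintype.card V := by
    rw [Nat.card_coe_set_eq, Nat.card_coe_set_eq,
      ← Set.ncard_union_eq hdisj (Set.toFinite _) (Set.toFinite _), hunion, Set.ncard_univ,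
      Nat.card_eq_fintype_card]
  omega


lemma no_full (hT : T.IsAcyclic) {S : Set (Sym2 V)} {e : Sym2 V} (heS : e ∈ S)
    (heT : e ∈ T.edgeSet) {c : (T.deleteEdges S).ConnectedComponent}
    (h : ∀ u ∈ e, u ∈ c.supp) : False := by
  revert heS heT h
  induction e using Sym2.ind with
  | _ a b =>
    intro heS heT h
    have hab : T.Adj a b := heT
    have h1 : (T.deleteEdges S).Reachable a b := by
      have ha := h a (Sym2.mem_mk_left a b)
      have hb := h b (Sym2.mem_mk_right a b)
      rw [ConnectedComponent.mem_supp_iff] at ha hb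
      exact ConnectedComponent.exact (ha.trans hb.symm)
    exact not_reachable_delete hT hab
      (h1.mono (deleteEdges_anti (Set.singleton_subset_iff.mpr heS)))

lemma side_lt (hT : T.IsAcyclic) {S : Set (Sym2 V)} {e : Sym2 V} (heS : e ∈ S)
    (heT : e ∈ T.edgeSet) {W : Set V} {n2 : ℕ} (hW : W.ncard = n2)
    (c : (T.deleteEdges S).ConnectedComponent) (hsub : c.supp ⊆ W)
    (hend : ∀ u ∈ e, u ∈ W) : Nat.card c.supp < n2 := by
  have hle : Nat.card c.supp ≤ n2 := by
    rw [Nat.card_coe_set_eq, ← hW]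
    exact Set.ncard_le_ncard hsub (Set.toFinite _)
  refine lt_of_le_of_ne hle fun heq => ?_
  have hfull : c.supp = W := by
    refine Set.eq_of_subset_of_ncard_le hsub ?_ (Set.toFinite _)
    rw [hW, ← heq, Nat.card_coe_set_eq]
  exact no_full hT heS heT (fun u hu => by rw [hfull]; exact hend u hu)

lemma edge_side {G : SimpleGraph V} {e : Sym2 V} (he : e ∈ G.edgeSet) :
    ∃ c : G.ConnectedComponent, ∀ u ∈ e, u ∈ c.supp := by
  revert he
  induction e using Sym2.ind with
  | _ a b =>
    intro he
    have hadj : G.Adj a b := he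
    refine ⟨G.connectedComponentMk b, ?_⟩
    intro u hu
    rw [Sym2.mem_iff] at hu
    rcases hu with rfl | rfl
    · rw [ConnectedComponent.mem_supp_iff]
      exact ConnectedComponent.sound hadj.reachable
    · rw [ConnectedComponent.mem_supp_iff]

lemma compSizes_all_lt {G : SimpleGraph V} {n2 : ℕ}
    (h : ∀ c : G.ConnectedComponent, Nat.card c.supp < n2) :
    ∀ m ∈ compSizes G, m < n2 := by
  intro m hm
  unfold compSizes at hm
  obtain ⟨c, _, rfl⟩ := Multiset.mem_map.mp hm
  exact h c

lemma compSizes_count_eq_one {G : SimpleGraph V} {n2 : ℕ} {c₀ : G.ConnectedComponent}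
    (h₀ : Nat.card c₀.supp = n2) (h : ∀ c, c ≠ c₀ → Nat.card c.supp < n2) :
    (compSizes G).count n2 = 1 ∧ ∀ m ∈ (compSizes G).erase n2, m < n2 := by
  classical
  letI : Fintype G.ConnectedComponent := Fintype.ofFinite _
  have hcount : (compSizes G).count n2 = 1 := by
    unfold compSizes
    rw [Multiset.count_map]
    have h1 : (Finset.univ.filter
        (fun c : G.ConnectedComponent => n2 = Nat.card c.supp)).card = 1 := by
      rw [Finset.card_eq_one]
      refine ⟨c₀, ?_⟩
      ext c
      simp only [Finset.mem_filter, Finset.mem_univ, true_and, Finset.mem_singleton]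
      constructor
      · intro hc
        by_contra hne
        exact absurd hc.symm (h c hne).ne
      · rintro rfl
        exact h₀.symm
    rw [← Finset.filter_val]
    exact h1
  refine ⟨hcount, ?_⟩
  intro m hm
  have hmem : m ∈ compSizes G := Multiset.mem_of_mem_erase hm
  have hne : m ≠ n2 := by
    rintro rfl
    have := Multiset.count_pos.mpr hm
    rw [Multiset.count_erase_self, hcount] at this
    omega
  unfold compSizes at hmem
  obtain ⟨c, _, rfl⟩ := Multiset.mem_map.mp hmem
  rcases eq_or_ne c c₀ with rfl | hc
  · exact absurd h₀ hne
  · exact lt_of_le_of_ne ((h c hc).le) hne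

lemma main_same (hT : T.IsTree) {e₁ : Sym2 V} {x y : V} (he₁ : e₁ = s(x, y)) (hxy : T.Adj x y)
    {n2 : ℕ}
    (hx : Nat.card ((T.deleteEdges {e₁}).connectedComponentMk x).supp = n2)
    (hy : Nat.card ((T.deleteEdges {e₁}).connectedComponentMk y).supp = n2)
    {ei ej : Sym2 V} (hei : ei ∈ T.edgeSet) (hej : ej ∈ T.edgeSet)
    (heix : ∀ u ∈ ei, u ∈ ((T.deleteEdges {e₁}).connectedComponentMk x).supp)
    (hejx : ∀ u ∈ ej, u ∈ ((T.deleteEdges {e₁}).connectedComponentMk x).supp) :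
    (compSizes (T.deleteEdges {e₁, ei, ej})).count n2 = 1 ∧
      ∀ m ∈ (compSizes (T.deleteEdges {e₁, ei, ej})).erase n2, m < n2 := by
  subst he₁
  have hGT' : T.deleteEdges {s(x, y), ei, ej} ≤ T.deleteEdges {s(x, y)} :=
    deleteEdges_anti (by intro e he; simp only [Set.mem_singleton_iff] at he; simp [he])
  have hGG : (T.deleteEdges {s(x, y)}).deleteEdges {ei, ej} =
      T.deleteEdges {s(x, y), ei, ej} := by
    rw [deleteEdges_deleteEdges, Set.singleton_union]
  have hdisj : (T.deleteEdges {s(x, y)}).connectedComponentMk x ≠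
      (T.deleteEdges {s(x, y)}).connectedComponentMk y := by
    rw [Ne, ConnectedComponent.eq]
    exact not_reachable_delete hT.IsAcyclic hxy
  have hyfull : ((T.deleteEdges {s(x, y), ei, ej}).connectedComponentMk y).supp =
      ((T.deleteEdges {s(x, y)}).connectedComponentMk y).supp := by
    apply Set.Subset.antisymm (supp_mono hGT' y)
    intro u hu
    rw [ConnectedComponent.mem_supp_iff] at hu
    have hr : (T.deleteEdges {s(x, y)}).Reachable u y := ConnectedComponent.exact hu
    have hr2 : ((T.deleteEdges {s(x, y)}).deleteEdges {ei, ej}).Reachable u y := by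
      apply reach_toDelete hr
      intro e he z hz hre
      have hzx : z ∈ ((T.deleteEdges {s(x, y)}).connectedComponentMk x).supp := by
        simp only [Set.mem_insert_iff, Set.mem_singleton_iff] at he
        rcases he with rfl | rfl
        · exact heix z hz
        · exact hejx z hz
      rw [ConnectedComponent.mem_supp_iff] at hzx
      exact hdisj (hzx.symm.trans ((ConnectedComponent.sound hre.symm).trans hu))
    rw [hGG] at hr2
    rw [ConnectedComponent.mem_supp_iff]
    exact ConnectedComponent.sound hr2
  have hycard : Nat.card ((T.deleteEdges {s(x, y), ei, ej}).connectedComponentMk y).supp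
      = n2 := by
    rw [hyfull, hy]
  have hother : ∀ c : (T.deleteEdges {s(x, y), ei, ej}).ConnectedComponent,
      c ≠ (T.deleteEdges {s(x, y), ei, ej}).connectedComponentMk y →
      Nat.card c.supp < n2 := by
    intro c
    induction c using SimpleGraph.ConnectedComponent.ind with
    | _ v =>
    intro hc
    rcases two_comps hT.isConnected.preconnected x y
        ((T.deleteEdges {s(x, y)}).connectedComponentMk v) with hside | hside
    · have hsub : ((T.deleteEdges {s(x, y), ei, ej}).connectedComponentMk v).supp ⊆
          ((T.deleteEdges {s(x, y)}).connectedComponentMk x).supp := by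
        have h1 := supp_mono hGT' v
        rw [hside] at h1
        exact h1
      refine side_lt hT.IsAcyclic (show ei ∈ ({s(x, y), ei, ej} : Set (Sym2 V)) by simp)
        hei ?_ _ hsub heix
      rw [← Nat.card_coe_set_eq, hx]
    · exfalso
      apply hc
      have hv : v ∈ ((T.deleteEdges {s(x, y)}).connectedComponentMk y).supp := by
        rw [ConnectedComponent.mem_supp_iff]
        exact hside
      rw [← hyfull, ConnectedComponent.mem_supp_iff] at hv
      exact hv
  exact compSizes_count_eq_one hycard hother

lemma main_diff (hT : T.IsTree) {e₁ : Sym2 V} {x y : V} (he₁ : e₁ = s(x, y)) (hxy : T.Adj x y)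
    {n2 : ℕ}
    (hx : Nat.card ((T.deleteEdges {e₁}).connectedComponentMk x).supp = n2)
    (hy : Nat.card ((T.deleteEdges {e₁}).connectedComponentMk y).supp = n2)
    {ei ej : Sym2 V} (hei : ei ∈ T.edgeSet) (hej : ej ∈ T.edgeSet)
    (heix : ∀ u ∈ ei, u ∈ ((T.deleteEdges {e₁}).connectedComponentMk x).supp)
    (hejy : ∀ u ∈ ej, u ∈ ((T.deleteEdges {e₁}).connectedComponentMk y).supp) :
    ∀ m ∈ compSizes (T.deleteEdges {e₁, ei, ej}), m < n2 := by
  subst he₁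
  have hGT' : T.deleteEdges {s(x, y), ei, ej} ≤ T.deleteEdges {s(x, y)} :=
    deleteEdges_anti (by intro e he; simp only [Set.mem_singleton_iff] at he; simp [he])
  apply compSizes_all_lt
  intro c
  induction c using SimpleGraph.ConnectedComponent.ind with
  | _ v =>
  rcases two_comps hT.isConnected.preconnected x y
      ((T.deleteEdges {s(x, y)}).connectedComponentMk v) with hside | hside
  · have hsub : ((T.deleteEdges {s(x, y), ei, ej}).connectedComponentMk v).supp ⊆
        ((T.deleteEdges {s(x, y)}).connectedComponentMk x).supp := by
      have h1 := supp_mono hGT' v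
      rw [hside] at h1
      exact h1
    refine side_lt hT.IsAcyclic (show ei ∈ ({s(x, y), ei, ej} : Set (Sym2 V)) by simp)
      hei ?_ _ hsub heix
    rw [← Nat.card_coe_set_eq, hx]
  · have hsub : ((T.deleteEdges {s(x, y), ei, ej}).connectedComponentMk v).supp ⊆
        ((T.deleteEdges {s(x, y)}).connectedComponentMk y).supp := by
      have h1 := supp_mono hGT' v
      rw [hside] at h1
      exact h1
    refine side_lt hT.IsAcyclic (show ej ∈ ({s(x, y), ei, ej} : Set (Sym2 V)) by simp)
      hej ?_ _ hsub hejy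
    rw [← Nat.card_coe_set_eq, hy]


end Stmt7Aux

/-- Lemma: in a double-centroid tree with central edge `e₁ = s(c₁,c₂)`, for any two other
distinct edges `eᵢ ≠ eⱼ`: if they lie in the same component of `T − e₁` then
`θ_T({e₁,eᵢ,eⱼ})` has exactly one part `n/2` with the other three parts `< n/2`; if they lie
in different components then all four parts are `< n/2`. -/
theorem stmt7 {V : Type*} [Fintype V] [DecidableEq V] (T : SimpleGraph V) (hT : T.IsTree)
    (hn : 4 ≤ Fintype.card V) (c₁ c₂ : V) (h₁ : IsCentroid T c₁) (h₂ : IsCentroid T c₂)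
    (hne : c₁ ≠ c₂) (hadj : T.Adj c₁ c₂)
    (ei ej : Sym2 V) (hei : ei ∈ T.edgeSet) (hej : ej ∈ T.edgeSet)
    (hij : ei ≠ ej) (hei1 : ei ≠ s(c₁, c₂)) (hej1 : ej ≠ s(c₁, c₂)) :
    ((∀ u ∈ ei, ∀ v ∈ ej, (T.deleteEdges {s(c₁, c₂)}).Reachable u v) →
      ((theta T ({s(c₁, c₂), ei, ej} : Finset (Sym2 V))).count (Fintype.card V / 2) = 1 ∧
        ∀ m ∈ (theta T ({s(c₁, c₂), ei, ej} : Finset (Sym2 V))).erase (Fintype.card V / 2),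
          m < Fintype.card V / 2)) ∧
    ((∀ u ∈ ei, ∀ v ∈ ej, ¬ (T.deleteEdges {s(c₁, c₂)}).Reachable u v) →
      ∀ m ∈ theta T ({s(c₁, c₂), ei, ej} : Finset (Sym2 V)), m < Fintype.card V / 2) := by
  classical
  obtain ⟨hh1, hh2⟩ := Stmt7Aux.halves hT hadj h₁ h₂
  have hei' : ei ∈ (T.deleteEdges {s(c₁, c₂)}).edgeSet := by
    rw [edgeSet_deleteEdges]; exact ⟨hei, by simpa using hei1⟩
  have hej' : ej ∈ (T.deleteEdges {s(c₁, c₂)}).edgeSet := by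
    rw [edgeSet_deleteEdges]; exact ⟨hej, by simpa using hej1⟩
  obtain ⟨ci, hci⟩ := Stmt7Aux.edge_side hei'
  obtain ⟨cj, hcj⟩ := Stmt7Aux.edge_side hej'
  obtain ⟨ui, hui⟩ := Stmt7Aux.sym2_nonempty ei
  obtain ⟨uj, huj⟩ := Stmt7Aux.sym2_nonempty ej
  have hciui : ci = (T.deleteEdges {s(c₁, c₂)}).connectedComponentMk ui := by
    have := hci ui hui
    rw [ConnectedComponent.mem_supp_iff] at this
    exact this.symm
  have hcjuj : cj = (T.deleteEdges {s(c₁, c₂)}).connectedComponentMk uj := by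
    have := hcj uj huj
    rw [ConnectedComponent.mem_supp_iff] at this
    exact this.symm
  have hTheta : theta T ({s(c₁, c₂), ei, ej} : Finset (Sym2 V)) =
      compSizes (T.deleteEdges {s(c₁, c₂), ei, ej}) := by
    have hset : (↑({s(c₁, c₂), ei, ej} : Finset (Sym2 V)) : Set (Sym2 V)) =
        {s(c₁, c₂), ei, ej} := by simp
    unfold theta
    rw [hset]
  constructor
  · intro hsame
    rw [hTheta]
    have hij2 : ci = cj := by
      rw [hciui, hcjuj]
      exact ConnectedComponent.sound (hsame ui hui uj huj)
    rcases Stmt7Aux.two_comps hT.isConnected.preconnected c₁ c₂ ci with hcx | hcx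
    · exact Stmt7Aux.main_same hT rfl hadj hh1 hh2 hei hej
        (fun u hu => by rw [← hcx]; exact hci u hu)
        (fun u hu => by rw [← hcx, hij2]; exact hcj u hu)
    · exact Stmt7Aux.main_same hT Sym2.eq_swap hadj.symm hh2 hh1 hei hej
        (fun u hu => by rw [← hcx]; exact hci u hu)
        (fun u hu => by rw [← hcx, hij2]; exact hcj u hu)
  · intro hdiffh
    rw [hTheta]
    have hij2 : ci ≠ cj := by
      intro h
      apply hdiffh ui hui uj huj
      rw [hciui, hcjuj] at h
      exact ConnectedComponent.exact h
    rcases Stmt7Aux.two_comps hT.isConnected.preconnected c₁ c₂ ci with hcx | hcx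
    · have hcy : cj = (T.deleteEdges {s(c₁, c₂)}).connectedComponentMk c₂ := by
        rcases Stmt7Aux.two_comps hT.isConnected.preconnected c₁ c₂ cj with h | h
        · exact absurd (hcx.trans h.symm) hij2
        · exact h
      exact Stmt7Aux.main_diff hT rfl hadj hh1 hh2 hei hej
        (fun u hu => by rw [← hcx]; exact hci u hu)
        (fun u hu => by rw [← hcy]; exact hcj u hu)
    · have hcy : cj = (T.deleteEdges {s(c₁, c₂)}).connectedComponentMk c₁ := by
        rcases Stmt7Aux.two_comps hT.isConnected.preconnected c₁ c₂ cj with h | h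
        · exact h
        · exact absurd (hcx.trans h.symm) hij2
      exact Stmt7Aux.main_diff hT Sym2.eq_swap hadj.symm hh2 hh1 hei hej
        (fun u hu => by rw [← hcx]; exact hci u hu)
        (fun u hu => by rw [← hcy]; exact hcj u hu)
end

section
/- Let T be a tree on n vertices, S a set of k−1 edges with k ≤ n − 3, and suppose the partition θ_T(S ∪ {ℓ}) is the same for every leaf edge ℓ of the forest T − S. Then all components of T − S with more than one vertex have the same number of vertices m, so θ_T(S) = (m,…,m,1,…,1) with m occurring M ≥ 1 times, and M(m−1) = n − k ≥ 3. -/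
open SimpleGraph

/-- A leaf edge of a graph: an edge incident to a vertex of degree 1. -/
def IsLeafEdge {V : Type*} (G : SimpleGraph V) (e : Sym2 V) : Prop :=
  e ∈ G.edgeSet ∧ ∃ v ∈ e, (G.neighborSet v).ncard = 1

section Aux

variable {V : Type*} [Fintype V]

lemma compSizes_def (G : SimpleGraph V) [inst : Fintype G.ConnectedComponent] :
    compSizes G = (Finset.univ : Finset G.ConnectedComponent).val.map
      fun c => Nat.card c.supp := by
  have h : Fintype.ofFinite G.ConnectedComponent = inst := Subsingleton.elim _ _
  unfold compSizes
  rw [h]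

lemma supp_card_pos (G : SimpleGraph V) (c : G.ConnectedComponent) : 1 ≤ Nat.card c.supp := by
  obtain ⟨v, hv⟩ := c.exists_rep
  have hmem : v ∈ c.supp := by
    rw [ConnectedComponent.mem_supp_iff]
    exact hv
  have : Nat.card c.supp ≠ 0 :=
    Nat.card_ne_zero.mpr ⟨⟨⟨v, hmem⟩⟩, Set.toFinite _⟩
  omega

lemma mem_compSizes {G : SimpleGraph V} {a : ℕ} :
    a ∈ compSizes G ↔ ∃ c : G.ConnectedComponent, Nat.card c.supp = a := by
  haveI : Fintype G.ConnectedComponent := Fintype.ofFinite _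
  rw [compSizes_def]
  simp [Multiset.mem_map]

lemma sum_compSizes (G : SimpleGraph V) : (compSizes G).sum = Fintype.card V := by
  classical
  haveI : Fintype G.ConnectedComponent := Fintype.ofFinite _
  rw [compSizes_def]
  have hsum : ((Finset.univ : Finset G.ConnectedComponent).val.map
      fun c => Nat.card c.supp).sum = ∑ c : G.ConnectedComponent, Nat.card c.supp := rfl
  rw [hsum]
  have hcard : ∀ c : G.ConnectedComponent,
      Nat.card c.supp = (Finset.univ.filter fun v => G.connectedComponentMk v = c).card := by
    intro c
    have : c.supp = ↑(Finset.univ.filter fun v => G.connectedComponentMk v = c) := by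
      ext x; simp
    rw [this]
    exact Nat.card_eq_finsetCard _
  simp_rw [hcard]
  exact (Finset.card_eq_sum_card_fiberwise (fun x _ => Finset.mem_univ _)).symm

lemma card_compSizes_connected {G : SimpleGraph V} (h : G.Connected) :
    (compSizes G).card = 1 := by
  haveI : Fintype G.ConnectedComponent := Fintype.ofFinite _
  rw [compSizes_def, Multiset.card_map]
  have hne : Nonempty V := h.nonempty
  obtain ⟨v₀⟩ := hne
  have : ∀ c : G.ConnectedComponent, c = G.connectedComponentMk v₀ := by
    refine ConnectedComponent.ind ?_
    intro v
    exact ConnectedComponent.sound (h.preconnected v v₀)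
  rw [show ((Finset.univ : Finset G.ConnectedComponent).val.card = Fintype.card G.ConnectedComponent) from rfl]
  exact Fintype.card_eq_one_iff.mpr ⟨G.connectedComponentMk v₀, fun c => this c⟩

lemma isAcyclic_mono {G H : SimpleGraph V} (h : G ≤ H) (hH : H.IsAcyclic) : G.IsAcyclic :=
  fun _ c hc => hH (c.mapLe h) (hc.mapLe h)

end Aux

set_option linter.unusedSectionVars false

section Bridge

variable {V : Type*} [Fintype V] {G : SimpleGraph V} {u v : V}

private lemma reach_aux (hb : ¬(G.deleteEdges {s(u,v)}).Reachable u v)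
    {x y : V} (p : G.Walk x y) :
    (G.deleteEdges {s(u,v)}).Reachable x y ∨
    ((G.deleteEdges {s(u,v)}).Reachable x u ∧ (G.deleteEdges {s(u,v)}).Reachable v y) ∨
    ((G.deleteEdges {s(u,v)}).Reachable x v ∧ (G.deleteEdges {s(u,v)}).Reachable u y) := by
  classical
  induction p with
  | nil => exact Or.inl (Reachable.refl _)
  | @cons a b c had q ih =>
    by_cases he : s(a, b) = s(u, v)
    · rw [Sym2.eq_iff] at he
      rcases he with ⟨rfl, rfl⟩ | ⟨rfl, rfl⟩
      · rcases ih with h1 | ⟨h1, h2⟩ | ⟨h1, h2⟩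
        · exact Or.inr (Or.inl ⟨Reachable.refl _, h1⟩)
        · exact absurd h1.symm hb
        · exact Or.inl h2
      · rcases ih with h1 | ⟨h1, h2⟩ | ⟨h1, h2⟩
        · exact Or.inr (Or.inr ⟨Reachable.refl _, h1⟩)
        · exact Or.inl h2
        · exact absurd h1 hb
    · have hadj : (G.deleteEdges {s(u,v)}).Adj a b := by
        rw [deleteEdges_adj]
        exact ⟨had, by simpa using he⟩
      rcases ih with h1 | ⟨h1, h2⟩ | ⟨h1, h2⟩
      · exact Or.inl (hadj.reachable.trans h1)
      · exact Or.inr (Or.inl ⟨hadj.reachable.trans h1, h2⟩)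
      · exact Or.inr (Or.inr ⟨hadj.reachable.trans h1, h2⟩)

lemma reach_or_reach (hb : ¬(G.deleteEdges {s(u,v)}).Reachable u v)
    {x : V} (hx : G.Reachable x u) :
    (G.deleteEdges {s(u,v)}).Reachable x u ∨ (G.deleteEdges {s(u,v)}).Reachable x v := by
  classical
  obtain ⟨p⟩ := hx
  rcases reach_aux hb p with h1 | ⟨h1, h2⟩ | ⟨h1, h2⟩
  · exact Or.inl h1
  · exact Or.inl h1
  · exact Or.inr h1

lemma reach_of_not {x y : V} (hx : ¬ G.Reachable x u) (hxy : G.Reachable x y) :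
    (G.deleteEdges {s(u,v)}).Reachable x y := by
  classical
  obtain ⟨p⟩ := hxy
  refine ⟨p.toDeleteEdges _ fun e he hes => ?_⟩
  rw [Set.mem_singleton_iff] at hes
  subst hes
  exact hx ⟨p.takeUntil u (p.fst_mem_support_of_mem_edges he)⟩

lemma bridge_split (h : G.Adj u v)
    (hb : ¬(G.deleteEdges {s(u,v)}).Reachable u v) :
    Nat.card ((G.deleteEdges {s(u,v)}).connectedComponentMk u).supp
      + Nat.card ((G.deleteEdges {s(u,v)}).connectedComponentMk v).supp
      = Nat.card (G.connectedComponentMk u).supp ∧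
    compSizes (G.deleteEdges {s(u,v)}) =
      Nat.card ((G.deleteEdges {s(u,v)}).connectedComponentMk u).supp ::ₘ
      Nat.card ((G.deleteEdges {s(u,v)}).connectedComponentMk v).supp ::ₘ
      (compSizes G).erase (Nat.card (G.connectedComponentMk u).supp) := by
  classical
  set G' := G.deleteEdges {s(u,v)} with hG'
  haveI : Fintype G'.ConnectedComponent := Fintype.ofFinite _
  haveI : Fintype G.ConnectedComponent := Fintype.ofFinite _
  have hle : G' ≤ G := G.deleteEdges_le _
  set φ : G'.ConnectedComponent → G.ConnectedComponent :=
    ConnectedComponent.map (Hom.ofLE hle) with hφ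
  have hφmk : ∀ x : V, φ (G'.connectedComponentMk x) = G.connectedComponentMk x := by
    intro x
    rfl
  set A := G'.connectedComponentMk v with hA
  set B := G'.connectedComponentMk u with hB
  set C := G.connectedComponentMk u with hC
  have hAB : A ≠ B := by
    intro hab
    exact hb (ConnectedComponent.exact hab.symm)
  have hCv : G.connectedComponentMk v = C := ConnectedComponent.sound h.symm.reachable
  have hfiber : ∀ D : G'.ConnectedComponent, φ D = C ↔ (D = B ∨ D = A) := by
    refine ConnectedComponent.ind ?_
    intro x
    constructor
    · intro hx
      rw [hφmk] at hx
      have : G.Reachable x u := ConnectedComponent.exact (hx.trans hC)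
      rcases reach_or_reach hb this with h1 | h1
      · exact Or.inl (ConnectedComponent.sound h1)
      · exact Or.inr (ConnectedComponent.sound h1)
    · intro hD
      rcases hD with hD | hD
      · rw [hD, hB, hφmk, hC]
      · rw [hD, hA, hφmk, hCv]
  have hsupp : ∀ D : G'.ConnectedComponent, φ D ≠ C → (φ D).supp = D.supp := by
    intro D hD
    obtain ⟨y, hy⟩ := D.exists_rep
    have hy : G'.connectedComponentMk y = D := hy
    ext x
    simp only [ConnectedComponent.mem_supp_iff]
    constructor
    · intro hx
      have hxu : ¬ G.Reachable x u := by
        intro hr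
        exact hD (by rw [← hx, hC]; exact (ConnectedComponent.sound hr))
      have hxy : G.Reachable x y := by
        apply ConnectedComponent.exact
        rw [hx, ← hy, hφmk]
      rw [← hy]
      exact ConnectedComponent.sound (reach_of_not hxu hxy)
    · intro hx
      rw [← hx, hφmk]
  have hdisj : Disjoint B.supp A.supp := by
    rw [Set.disjoint_left]
    intro x hxB hxA
    rw [ConnectedComponent.mem_supp_iff] at hxB hxA
    exact hAB (hxA ▸ hxB ▸ rfl)
  have hCsupp : C.supp = B.supp ∪ A.supp := by
    ext x
    simp only [ConnectedComponent.mem_supp_iff, Set.mem_union]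
    constructor
    · intro hx
      have : G.Reachable x u := ConnectedComponent.exact (hx.trans hC)
      rcases reach_or_reach hb this with h1 | h1
      · exact Or.inl (ConnectedComponent.sound h1)
      · exact Or.inr (ConnectedComponent.sound h1)
    · intro hD
      rcases hD with hD | hD
      · rw [← hφmk x, hD, hB, hφmk, hC]
      · rw [← hφmk x, hD, hA, hφmk, hCv]
  have hcards : Nat.card B.supp + Nat.card A.supp = Nat.card C.supp := by
    rw [hCsupp]
    simp only [Nat.card_coe_set_eq]
    exact (Set.ncard_union_eq hdisj (Set.toFinite _) (Set.toFinite _)).symm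
  refine ⟨hcards, ?_⟩
  set s : Finset G'.ConnectedComponent := (Finset.univ.erase B).erase A with hs
  have hsmem : ∀ D : G'.ConnectedComponent, D ∈ s ↔ (D ≠ A ∧ D ≠ B) := by
    intro D
    simp [hs, Finset.mem_erase, and_assoc]
  have hAmem : A ∈ (Finset.univ : Finset G'.ConnectedComponent).val.erase B :=
    (Multiset.mem_erase_of_ne hAB).mpr (Finset.mem_univ A)
  have huniv' : (Finset.univ : Finset G'.ConnectedComponent).val = B ::ₘ A ::ₘ s.val := by
    rw [hs, Finset.erase_val, Finset.erase_val,
      Multiset.cons_erase hAmem,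
      Multiset.cons_erase (Finset.mem_univ B : B ∈ (Finset.univ : Finset G'.ConnectedComponent))]
  have hCmem : C ∈ (Finset.univ : Finset G.ConnectedComponent).val := Finset.mem_univ C
  have huniv : (Finset.univ : Finset G.ConnectedComponent).val =
      C ::ₘ (Finset.univ.erase C).val := by
    rw [Finset.erase_val, Multiset.cons_erase hCmem]
  rw [compSizes_def G', compSizes_def G, huniv', huniv]
  simp only [Multiset.map_cons]
  rw [Multiset.erase_cons_head]
  rw [Multiset.cons_inj_right, Multiset.cons_inj_right]
  -- remaining: map over s equals map over univ.erase C
  have hnotC : ∀ D ∈ s, φ D ≠ C := by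
    intro D hD hDC
    rcases (hfiber D).mp hDC with h1 | h1
    · exact ((hsmem D).mp hD).2 h1
    · exact ((hsmem D).mp hD).1 h1
  have hinj : Set.InjOn φ ↑s := by
    intro D hD D' hD' hDD
    have h1 := hsupp D (hnotC D hD)
    have h2 := hsupp D' (hnotC D' hD')
    rw [hDD] at h1
    exact ConnectedComponent.supp_injective (h1.symm.trans h2)
  have himg : s.image φ = Finset.univ.erase C := by
    ext E
    simp only [Finset.mem_image, Finset.mem_erase, Finset.mem_univ, and_true]
    constructor
    · rintro ⟨D, hD, rfl⟩
      exact hnotC D hD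
    · intro hE
      obtain ⟨x, rfl⟩ := E.exists_rep
      have hE' : G.connectedComponentMk x ≠ C := hE
      refine ⟨G'.connectedComponentMk x, ?_, hφmk x⟩
      rw [hsmem]
      constructor
      · intro hxA
        exact hE' (by rw [← hφmk x, hxA, hA, hφmk, hCv])
      · intro hxB
        exact hE' (by rw [← hφmk x, hxB, hB, hφmk, hC])
  calc Multiset.map (fun c => Nat.card c.supp) s.val
      = Multiset.map ((fun c : G.ConnectedComponent => Nat.card c.supp) ∘ φ) s.val := by
        apply Multiset.map_congr rfl
        intro D hD
        have := hsupp D (hnotC D (Finset.mem_val.mp hD))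
        simp only [Function.comp_apply]
        rw [← this]
    _ = Multiset.map (fun c : G.ConnectedComponent => Nat.card c.supp) (s.val.map φ) := by
        rw [Multiset.map_map]
    _ = Multiset.map (fun c : G.ConnectedComponent => Nat.card c.supp)
          (Finset.univ.erase C).val := by
        rw [← himg, Finset.image_val_of_injOn hinj]

end Bridge

section Leaf

variable {V : Type*} [Fintype V] {G : SimpleGraph V} {u v : V}

/-- If `v` is a leaf with unique neighbor `u`, then after deleting the edge `uv`,
the component of `v` is the singleton `{v}`. -/
lemma leaf_supp_singleton (hnb : G.neighborSet v = {u}) :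
    ((G.deleteEdges {s(u,v)}).connectedComponentMk v).supp = {v} := by
  have hiso : ∀ {y : V}, ¬ (G.deleteEdges {s(u,v)}).Adj v y := by
    intro y hy
    rw [deleteEdges_adj] at hy
    have : y ∈ G.neighborSet v := hy.1
    rw [hnb, Set.mem_singleton_iff] at this
    subst this
    exact hy.2 (by rw [Sym2.eq_swap]; rfl)
  have key : ∀ {x : V} (p : (G.deleteEdges {s(u,v)}).Walk v x), v = x := by
    intro x p
    cases p with
    | nil => rfl
    | cons h q => exact absurd h hiso
  ext x
  simp only [ConnectedComponent.mem_supp_iff, Set.mem_singleton_iff]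
  constructor
  · intro hx
    obtain ⟨p⟩ := (ConnectedComponent.exact hx).symm
    exact (key p).symm
  · rintro rfl
    rfl

lemma leaf_split (hadj : G.Adj u v) (hnb : G.neighborSet v = {u}) (hac : G.IsAcyclic) :
    2 ≤ Nat.card (G.connectedComponentMk u).supp ∧
    compSizes (G.deleteEdges {s(u,v)}) =
      1 ::ₘ (Nat.card (G.connectedComponentMk u).supp - 1) ::ₘ
      (compSizes G).erase (Nat.card (G.connectedComponentMk u).supp) := by
  have hbr : G.IsBridge s(u, v) := isAcyclic_iff_forall_adj_isBridge.mp hac hadj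
  have hb : ¬(G.deleteEdges {s(u,v)}).Reachable u v := hbr
  obtain ⟨hsum, hms⟩ := bridge_split hadj hb
  have h1 : Nat.card ((G.deleteEdges {s(u,v)}).connectedComponentMk v).supp = 1 := by
    rw [leaf_supp_singleton hnb]
    simp
  have hpos := supp_card_pos (G.deleteEdges {s(u,v)})
    ((G.deleteEdges {s(u,v)}).connectedComponentMk u)
  rw [h1] at hsum hms
  constructor
  · omega
  · rw [hms, Multiset.cons_swap]
    congr 1
    congr 1
    omega

/-- Any component of an acyclic graph with at least two vertices contains a leaf. -/
lemma exists_leaf (hac : G.IsAcyclic) (c : G.ConnectedComponent)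
    (h2 : 2 ≤ Nat.card c.supp) :
    ∃ x y : V, G.Adj x y ∧ G.neighborSet y = {x} ∧ G.connectedComponentMk y = c := by
  classical
  -- two distinct vertices in the component
  have h2' : 1 < c.supp.ncard := by rw [← Nat.card_coe_set_eq]; omega
  obtain ⟨a, b, ha, hb, hab⟩ := (Set.one_lt_ncard_iff (Set.toFinite _)).mp h2'
  rw [ConnectedComponent.mem_supp_iff] at ha hb
  have hreach : G.Reachable a b := ConnectedComponent.exact (ha.trans hb.symm)
  obtain ⟨p₀⟩ := hreach
  have hp₀ : p₀.toPath.1.IsPath := p₀.toPath.2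
  have hlen₀ : 1 ≤ (p₀.toPath.1).length := by
    by_contra hcon
    push_neg at hcon
    interval_cases h : (p₀.toPath.1).length
    exact hab ((p₀.toPath.1).eq_of_length_eq_zero h)
  -- maximal length path starting in c
  set P : ℕ → Prop := fun n => ∃ (x y : V) (p : G.Walk x y),
    p.IsPath ∧ G.connectedComponentMk x = c ∧ p.length = n with hP
  set σ : Finset ℕ := (Finset.range (Fintype.card V)).filter P with hσ
  have hσmem : ∀ n, n ∈ σ ↔ n < Fintype.card V ∧ P n := by
    intro n; simp [hσ]
  have hne : (p₀.toPath.1).length ∈ σ := by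
    rw [hσmem]
    exact ⟨hp₀.length_lt, a, b, p₀.toPath.1, hp₀, ha, rfl⟩
  have hσne : σ.Nonempty := ⟨_, hne⟩
  set n := σ.max' hσne with hn
  obtain ⟨x, y, p, hp, hx, hplen⟩ : P n := ((hσmem n).mp (σ.max'_mem hσne)).2
  have hn1 : 1 ≤ n := le_trans hlen₀ (σ.le_max' _ hne)
  -- reverse the path: q goes from y
  set q := p.reverse with hq
  have hqp : q.IsPath := hp.reverse
  have hqlen : q.length = n := by rw [hq, SimpleGraph.Walk.length_reverse, hplen]
  have hyc : G.connectedComponentMk y = c := by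
    rw [← hx]
    exact ConnectedComponent.sound ⟨q⟩
  have hqnil : ¬ q.Nil := by
    rw [SimpleGraph.Walk.nil_iff_length_eq]
    omega
  obtain ⟨w, hyw, r, hqeq⟩ := SimpleGraph.Walk.not_nil_iff.mp hqnil
  refine ⟨w, y, hyw.symm, ?_, hyc⟩
  ext z
  simp only [mem_neighborSet, Set.mem_singleton_iff]
  constructor
  · intro hz
    by_contra hzw
    by_cases hzs : z ∈ q.support
    · -- z on the path: two distinct z–y paths contradict acyclicity
      have htp : (q.takeUntil z hzs).IsPath := hqp.takeUntil hzs
      have hrev : (q.takeUntil z hzs).reverse.IsPath := htp.reverse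
      have single : ((q.takeUntil z hzs).reverse : G.Walk z y) =
          (SimpleGraph.Path.singleton hz.symm : G.Path z y).1 := by
        have := hac.path_unique ⟨(q.takeUntil z hzs).reverse, hrev⟩
          (SimpleGraph.Path.singleton hz.symm)
        exact congrArg Subtype.val this
      have hlen1 : (q.takeUntil z hzs).length = 1 := by
        have := congrArg SimpleGraph.Walk.length single
        rwa [SimpleGraph.Walk.length_reverse] at this
      -- first edge of takeUntil equals first edge of q
      obtain ⟨w1, hyw1, r1, ht1⟩ := SimpleGraph.Walk.not_nil_iff.mp
        (by rw [SimpleGraph.Walk.nil_iff_length_eq, hlen1]; simp :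
          ¬ (q.takeUntil z hzs).Nil)
      have hr1len : r1.length = 0 := by
        have := congrArg SimpleGraph.Walk.length ht1
        rw [hlen1, SimpleGraph.Walk.length_cons] at this
        omega
      have hw1z : w1 = z := r1.eq_of_length_eq_zero hr1len
      have hedges : (q.takeUntil z hzs).edges ++ (q.dropUntil z hzs).edges = q.edges := by
        rw [← SimpleGraph.Walk.edges_append, SimpleGraph.Walk.take_spec]
      have hq_edges : q.edges = s(y, w) :: r.edges := by
        rw [hqeq, SimpleGraph.Walk.edges_cons]
      have hr1e : r1.edges = [] := by
        have := r1.length_edges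
        rw [hr1len] at this
        exact List.eq_nil_of_length_eq_zero this
      rw [ht1, hq_edges] at hedges
      simp only [SimpleGraph.Walk.edges_cons, hr1e, List.cons_append, List.nil_append]
        at hedges
      have : s(y, w1) = s(y, w) := (List.cons.injEq _ _ _ _ ▸ hedges).1
      rw [hw1z] at this
      have : z = w := by
        rcases Sym2.eq_iff.mp this with ⟨_, h'⟩ | ⟨h', h''⟩
        · exact h'
        · exact h''.trans h'
      exact hzw this
    · -- extend the path: contradiction with maximality
      have hext : (SimpleGraph.Walk.cons hz.symm q).IsPath := by
        rw [SimpleGraph.Walk.cons_isPath_iff]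
        exact ⟨hqp, hzs⟩
      have hzc : G.connectedComponentMk z = c :=
        (ConnectedComponent.sound hz.symm.reachable).trans hyc
      have hmem : (SimpleGraph.Walk.cons hz.symm q).length ∈ σ := by
        rw [hσmem]
        exact ⟨hext.length_lt, z, x, _, hext, hzc, rfl⟩
      have h4 := σ.le_max' _ hmem
      simp only [SimpleGraph.Walk.length_cons] at h4
      omega
  · rintro rfl
    exact hyw

end Leaf

section Theta

variable {V : Type*} [Fintype V] [DecidableEq V]

lemma theta_insert (T : SimpleGraph V) (S : Finset (Sym2 V)) (e : Sym2 V) :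
    theta T (insert e S) = compSizes ((T.deleteEdges ↑S).deleteEdges {e}) := by
  rw [theta, deleteEdges_deleteEdges]
  congr 1
  rw [Finset.coe_insert, Set.insert_eq, Set.union_comm]

lemma card_theta (T : SimpleGraph V) (hT : T.IsTree) :
    ∀ S : Finset (Sym2 V), ↑S ⊆ T.edgeSet → (theta T S).card = S.card + 1 := by
  classical
  intro S
  induction S using Finset.induction_on with
  | empty =>
    intro _
    rw [theta]
    simp only [Finset.coe_empty, deleteEdges_empty, Finset.card_empty]
    rw [card_compSizes_connected hT.isConnected]
  | @insert e S' heS' ih =>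
    intro hsub
    have hS' : ↑S' ⊆ T.edgeSet := by
      refine subset_trans ?_ hsub
      intro x hx
      simp only [Finset.coe_insert, Set.mem_insert_iff]
      exact Or.inr hx
    have heT : e ∈ T.edgeSet := hsub (by simp)
    have heG : e ∈ (T.deleteEdges ↑S').edgeSet := by
      rw [edgeSet_deleteEdges]
      exact ⟨heT, heS'⟩
    have hac : (T.deleteEdges ↑S').IsAcyclic :=
      isAcyclic_mono (T.deleteEdges_le _) hT.IsAcyclic
    rw [theta_insert]
    obtain ⟨u, v⟩ := e
    have hadj : (T.deleteEdges ↑S').Adj u v := (mem_edgeSet _).mp heG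
    have hbr := isAcyclic_iff_forall_adj_isBridge.mp hac hadj
    obtain ⟨_, hms⟩ := bridge_split hadj hbr
    rw [hms]
    have hcmem : Nat.card ((T.deleteEdges ↑S').connectedComponentMk u).supp
        ∈ compSizes (T.deleteEdges ↑S') := mem_compSizes.mpr ⟨_, rfl⟩
    rw [Multiset.card_cons, Multiset.card_cons, Multiset.card_erase_of_mem hcmem]
    have hth : (theta T S').card = S'.card + 1 := ih hS'
    rw [theta] at hth
    rw [hth, Nat.pred_succ, Finset.card_insert_of_notMem heS']

lemma leaf_theta (T : SimpleGraph V) (hT : T.IsTree) (S : Finset (Sym2 V))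
    {c : ℕ} (hc : c ∈ theta T S) (h2 : 2 ≤ c) :
    ∃ ℓ : Sym2 V, IsLeafEdge (T.deleteEdges ↑S) ℓ ∧
      theta T (insert ℓ S) = 1 ::ₘ (c - 1) ::ₘ (theta T S).erase c := by
  classical
  have hac : (T.deleteEdges ↑S).IsAcyclic :=
    isAcyclic_mono (T.deleteEdges_le _) hT.IsAcyclic
  rw [theta] at hc
  obtain ⟨C, hC⟩ := mem_compSizes.mp hc
  obtain ⟨x, y, hadj, hnb, hyC⟩ := exists_leaf hac C (by omega)
  refine ⟨s(x, y), ⟨(mem_edgeSet _).mpr hadj, y, Sym2.mem_mk_right x y, ?_⟩, ?_⟩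
  · rw [hnb, Set.ncard_singleton]
  · obtain ⟨_, hms⟩ := leaf_split hadj hnb hac
    have hxC : (T.deleteEdges ↑S).connectedComponentMk x = C :=
      (ConnectedComponent.sound hadj.reachable).trans hyC
    rw [theta_insert, hms, hxC, hC, theta]

end Theta

lemma cons_erase_ne {t : Multiset ℕ} {x y : ℕ} (hxy : x < y) (hx2 : 2 ≤ x) (hy : y ∈ t) :
    (x - 1) ::ₘ t.erase x ≠ (y - 1) ::ₘ t.erase y := by
  intro h
  have hcnt := congrArg (Multiset.count y) h
  rw [Multiset.count_cons, Multiset.count_cons,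
    Multiset.count_erase_of_ne (by omega : y ≠ x), Multiset.count_erase_self] at hcnt
  have hy1 : 1 ≤ t.count y := Multiset.one_le_count_iff_mem.mpr hy
  have h1 : (if y = x - 1 then 1 else 0) = 0 := by rw [if_neg (by omega)]
  have h2 : (if y = y - 1 then 1 else 0) = 0 := by rw [if_neg (by omega)]
  rw [h1, h2] at hcnt
  omega

/-- If `θ_T(S ∪ {ℓ})` is the same for every leaf edge `ℓ` of `T − S` (with `|S| = k − 1`,
`k ≤ n − 3`), then all components of `T − S` with more than one vertex have a common size
`m`, so `θ_T(S) = (m,…,m,1,…,1)` with `m` occurring `M ≥ 1` times, and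
`M(m − 1) = n − k ≥ 3`. -/
theorem stmt10 {V : Type*} [Fintype V] [DecidableEq V] (T : SimpleGraph V) (hT : T.IsTree)
    (k : ℕ) (hk1 : 1 ≤ k) (hk : k ≤ Fintype.card V - 3)
    (S : Finset (Sym2 V)) (hS : ↑S ⊆ T.edgeSet) (hcard : S.card = k - 1)
    (hsame : ∀ ℓ ℓ' : Sym2 V, IsLeafEdge (T.deleteEdges ↑S) ℓ →
      IsLeafEdge (T.deleteEdges ↑S) ℓ' → theta T (insert ℓ S) = theta T (insert ℓ' S)) :
    ∃ m M : ℕ, 2 ≤ m ∧ 1 ≤ M ∧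
      theta T S = Multiset.replicate M m + Multiset.replicate (k - M) 1 ∧
      M * (m - 1) = Fintype.card V - k ∧ 3 ≤ Fintype.card V - k := by

  classical
  have hsum : (theta T S).sum = Fintype.card V := sum_compSizes _
  have htcard : (theta T S).card = k := by
    rw [card_theta T hT S hS, hcard]
    omega
  have hpos : ∀ a ∈ theta T S, 1 ≤ a := by
    intro a hat
    rw [theta] at hat
    obtain ⟨c, hc⟩ := mem_compSizes.mp hat
    rw [← hc]
    exact supp_card_pos _ _
  have hnk : k + 3 ≤ Fintype.card V := by
    rcases Nat.lt_or_ge (Fintype.card V) 3 with h | h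
    · omega
    · omega
  have hex : ∃ m ∈ theta T S, 2 ≤ m := by
    by_contra hcon
    push_neg at hcon
    have hle : (theta T S).sum ≤ (theta T S).card • 1 :=
      Multiset.sum_le_card_nsmul _ 1 fun x hx => by have := hcon x hx; omega
    rw [htcard, hsum, smul_eq_mul] at hle
    omega
  obtain ⟨m, hmt, hm2⟩ := hex
  have hkey : ∀ c ∈ theta T S, 2 ≤ c → c = m := by
    intro c hct hc2
    by_contra hne
    obtain ⟨ℓ, hℓ, hθℓ⟩ := leaf_theta T hT S hct hc2
    obtain ⟨ℓ', hℓ', hθℓ'⟩ := leaf_theta T hT S hmt hm2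
    have heq := hsame ℓ ℓ' hℓ hℓ'
    rw [hθℓ, hθℓ'] at heq
    have heq2 : (c - 1) ::ₘ (theta T S).erase c = (m - 1) ::ₘ (theta T S).erase m :=
      (Multiset.cons_inj_right 1).mp heq
    rcases lt_or_gt_of_ne hne with hlt | hgt
    · exact cons_erase_ne hlt hc2 hmt heq2
    · exact cons_erase_ne hgt hm2 hct heq2.symm
  set M := (theta T S).count m with hM
  have hM1 : 1 ≤ M := Multiset.one_le_count_iff_mem.mpr hmt
  have hMk : M ≤ k := by
    rw [hM, ← htcard]
    exact Multiset.count_le_card m _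
  have hall : ∀ a ∈ theta T S, a = m ∨ a = 1 := by
    intro a hat
    rcases Nat.lt_or_ge a 2 with h | h
    · have := hpos a hat
      omega
    · exact Or.inl (hkey a hat h)
  have hfilter1 : (theta T S).filter (· = m) = Multiset.replicate M m := by
    rw [hM]
    exact Multiset.filter_eq' _ _
  have hfilter2 : (theta T S).filter (fun a => ¬ a = m) = Multiset.replicate (k - M) 1 := by
    rw [Multiset.eq_replicate]
    constructor
    · have hadd := congrArg Multiset.card ((theta T S).filter_add_not (· = m))
      rw [Multiset.card_add, htcard, hfilter1, Multiset.card_replicate] at hadd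
      omega
    · intro b hb
      rw [Multiset.mem_filter] at hb
      rcases hall b hb.1 with h | h
      · exact absurd h hb.2
      · exact h
  have hsplit : theta T S = Multiset.replicate M m + Multiset.replicate (k - M) 1 := by
    rw [← hfilter1, ← hfilter2]
    exact ((theta T S).filter_add_not (· = m)).symm
  refine ⟨m, M, hm2, hM1, hsplit, ?_, by omega⟩
  have hsum2 : M * m + (k - M) * 1 = Fintype.card V := by
    rw [← hsum, hsplit, Multiset.sum_add, Multiset.sum_replicate, Multiset.sum_replicate,
      smul_eq_mul, smul_eq_mul]
  obtain ⟨m', rfl⟩ : ∃ m', m = m' + 1 := ⟨m - 1, by omega⟩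
  have hq : M * (m' + 1) = M * m' + M := by ring
  rw [hq] at hsum2
  simp only [Nat.add_sub_cancel]
  omega
end

section
/- Labeled (n−2)-cuts do not determine labeled (n−3)-cuts in general: there exist a tree T on n vertices (for some n), and a set S of n−3 edges of T, together with another tree T′ and set S′ of n−3 edges, such that θ_T(S ∪ {x}) = (2,1,…,1) for every remaining edge x of T and likewise for T′, but θ_T(S) = (3,1,…,1) while θ_{T′}(S′) = (2,2,1,…,1). -/
open SimpleGraph

instance delDec {V : Type*} [DecidableEq V] (G : SimpleGraph V) [DecidableRel G.Adj]
    (S : Finset (Sym2 V)) : DecidableRel (G.deleteEdges ↑S).Adj := fun a b =>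
  decidable_of_iff (G.Adj a b ∧ s(a,b) ∉ S) (by rw [deleteEdges_adj]; simp)

lemma compSizes_eq {V : Type*} [Fintype V] [DecidableEq V] (G : SimpleGraph V)
    [DecidableRel G.Adj] :
    compSizes G = (Finset.univ : Finset G.ConnectedComponent).val.map
      fun c => (Finset.univ.filter (· ∈ c.supp)).card := by
  unfold compSizes
  rw [Subsingleton.elim (Fintype.ofFinite G.ConnectedComponent)
    (inferInstance : Fintype G.ConnectedComponent)]
  refine Multiset.map_congr rfl fun c _ => ?_
  rw [Nat.card_eq_card_toFinset]
  congr 1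
  ext v
  simp

lemma isAcyclic_of_forall {V : Type*} [Fintype V] [DecidableEq V] (G : SimpleGraph V)
    [DecidableRel G.Adj]
    (h : ∀ v w : V, G.Adj v w → ¬(G.deleteEdges ↑({s(v,w)} : Finset (Sym2 V))).Reachable v w) :
    G.IsAcyclic := by
  rw [isAcyclic_iff_forall_adj_isBridge]
  intro v w hvw
  rw [isBridge_iff]
  have := h v w hvw
  simpa [deleteEdges] using this

def Tstar : SimpleGraph (Fin 4) where
  Adj a b := (a = 0 ∨ b = 0) ∧ a ≠ b
  symm := ⟨by tauto⟩
  loopless := ⟨by tauto⟩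

instance : DecidableRel Tstar.Adj := fun a b => by unfold Tstar; exact inferInstance

def Tpath : SimpleGraph (Fin 4) where
  Adj a b := a.val + 1 = b.val ∨ b.val + 1 = a.val
  symm := by tauto
  loopless := ⟨by intro a h; omega⟩

instance : DecidableRel Tpath.Adj := fun a b => by unfold Tpath; exact inferInstance

/-- Labeled `(n−2)`-cuts do not determine labeled `(n−3)`-cuts: there are trees `T, T'` and
sets `S, S'` of `n − 3` edges whose one-further-edge cuts all give `(2,1,…,1)`, but with
`θ_T(S) = (3,1,…,1)` and `θ_{T'}(S') = (2,2,1,…,1)`. -/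
theorem stmt12 :
    ∃ (n : ℕ) (T T' : SimpleGraph (Fin n)) (S S' : Finset (Sym2 (Fin n))),
      T.IsTree ∧ T'.IsTree ∧
      ↑S ⊆ T.edgeSet ∧ S.card = n - 3 ∧
      ↑S' ⊆ T'.edgeSet ∧ S'.card = n - 3 ∧
      (∀ x ∈ T.edgeSet, x ∉ S →
        theta T (insert x S) = 2 ::ₘ Multiset.replicate (n - 2) 1) ∧
      (∀ x ∈ T'.edgeSet, x ∉ S' →
        theta T' (insert x S') = 2 ::ₘ Multiset.replicate (n - 2) 1) ∧
      theta T S = 3 ::ₘ Multiset.replicate (n - 3) 1 ∧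
      theta T' S' = 2 ::ₘ 2 ::ₘ Multiset.replicate (n - 4) 1 := by
  refine ⟨4, Tstar, Tpath, {s(0,1)}, {s(1,2)}, ?_, ?_, ?_, rfl, ?_, rfl, ?_, ?_, ?_, ?_⟩
  · exact ⟨(connected_iff _).mpr ⟨by decide, ⟨0⟩⟩, isAcyclic_of_forall _ (by decide)⟩
  · exact ⟨(connected_iff _).mpr ⟨by decide, ⟨0⟩⟩, isAcyclic_of_forall _ (by decide)⟩
  · intro x hx; simp only [Finset.coe_singleton, Set.mem_singleton_iff] at hx; subst hx; decide
  · intro x hx; simp only [Finset.coe_singleton, Set.mem_singleton_iff] at hx; subst hx; decide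
  · intro x hx hxS
    have hmem : x ∈ ({s(0,1), s(0,2), s(0,3)} : Finset (Sym2 (Fin 4))) := by
      revert hx; revert x; decide
    simp only [Finset.mem_insert, Finset.mem_singleton] at hmem
    rcases hmem with h | h | h
    · exact absurd (h ▸ Finset.mem_singleton_self _) hxS
    · subst h; rw [theta, compSizes_eq]; decide
    · subst h; rw [theta, compSizes_eq]; decide
  · intro x hx hxS
    have hmem : x ∈ ({s(0,1), s(1,2), s(2,3)} : Finset (Sym2 (Fin 4))) := by
      revert hx; revert x; decide
    simp only [Finset.mem_insert, Finset.mem_singleton] at hmem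
    rcases hmem with h | h | h
    · subst h; rw [theta, compSizes_eq]; decide
    · exact absurd (h ▸ Finset.mem_singleton_self _) hxS
    · subst h; rw [theta, compSizes_eq]; decide
  · rw [theta, compSizes_eq]; decide
  · rw [theta, compSizes_eq]; decide
end

section
/- For any tree T on n vertices, there exists an edge e incident to a centroid of T such that min θ_T({e}) (the smaller of the two component sizes upon removing e) is maximal among all edges of T. -/
open SimpleGraph

namespace Stmt14Aux

set_option linter.unusedSectionVars false
variable {V : Type*} [Fintype V]

lemma univ_congr {α : Type*} (i j : Fintype α) : @Finset.univ α i = @Finset.univ α j := by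
  cases Subsingleton.elim i j; rfl

lemma mem_compSizes {G : SimpleGraph V} {m : ℕ} :
    m ∈ compSizes G ↔ ∃ c : G.ConnectedComponent, Nat.card c.supp = m := by
  unfold compSizes
  simp [Multiset.mem_map]

lemma card_supp_le_vertexWeight {G : SimpleGraph V} {v : V}
    (D : (G.induce ({v}ᶜ : Set V)).ConnectedComponent) :
    Nat.card D.supp ≤ vertexWeight G v := by
  unfold vertexWeight
  rw [univ_congr (Fintype.ofFinite _) (Fintype.ofFinite _)]
  exact Finset.le_sup (f := fun c => Nat.card c.supp)
    (@Finset.mem_univ _ (Fintype.ofFinite _) D)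

lemma vertexWeight_le {G : SimpleGraph V} {v : V} {m : ℕ}
    (h : ∀ D : (G.induce ({v}ᶜ : Set V)).ConnectedComponent, Nat.card D.supp ≤ m) :
    vertexWeight G v ≤ m := by
  unfold vertexWeight
  exact Finset.sup_le fun D _ => h D

lemma exists_comp_vertexWeight {G : SimpleGraph V} {v : V}
    (hne : Nonempty ((G.induce ({v}ᶜ : Set V)).ConnectedComponent)) :
    ∃ D : (G.induce ({v}ᶜ : Set V)).ConnectedComponent,
      Nat.card D.supp = vertexWeight G v := by
  unfold vertexWeight
  obtain ⟨D, _, hD⟩ := Finset.exists_mem_eq_sup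
    (@Finset.univ _ (Fintype.ofFinite ((G.induce ({v}ᶜ : Set V)).ConnectedComponent)))
    (@Finset.univ_nonempty _ (Fintype.ofFinite _) hne)
    (fun c : (G.induce ({v}ᶜ : Set V)).ConnectedComponent => Nat.card c.supp)
  exact ⟨D, hD.symm⟩

lemma reach_or {G : SimpleGraph V} {x y : V} :
    ∀ {u z : V}, G.Walk u z →
      (G.deleteEdges {s(x,y)}).Reachable u z ∨ (G.deleteEdges {s(x,y)}).Reachable x z ∨
        (G.deleteEdges {s(x,y)}).Reachable y z := by
  intro u z p
  induction p with
  | nil => exact Or.inl (Reachable.refl _)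
  | @cons u v z h p ih =>
    by_cases he : s(u, v) = s(x, y)
    · rw [Sym2.eq_iff] at he
      rcases he with ⟨rfl, rfl⟩ | ⟨rfl, rfl⟩
      · rcases ih with h' | h' | h'
        · exact Or.inr (Or.inr h')
        · exact Or.inr (Or.inl h')
        · exact Or.inr (Or.inr h')
      · rcases ih with h' | h' | h'
        · exact Or.inr (Or.inl h')
        · exact Or.inr (Or.inl h')
        · exact Or.inr (Or.inr h')
    · have hadj : (G.deleteEdges {s(x,y)}).Adj u v := by
        rw [deleteEdges_adj]
        exact ⟨h, by simpa using he⟩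
      rcases ih with h' | h' | h'
      · exact Or.inl (hadj.reachable.trans h')
      · exact Or.inr (Or.inl h')
      · exact Or.inr (Or.inr h')

lemma cover {G : SimpleGraph V} (hG : G.Preconnected) (x y z : V) :
    (G.deleteEdges {s(x,y)}).Reachable x z ∨ (G.deleteEdges {s(x,y)}).Reachable y z := by
  obtain ⟨p⟩ := hG x z
  rcases reach_or (x := x) (y := y) p with h | h | h
  exacts [Or.inl h, Or.inl h, Or.inr h]

lemma not_reach {T : SimpleGraph V} (hT : T.IsTree) {x y : V} (hxy : T.Adj x y) :
    ¬ (T.deleteEdges {s(x,y)}).Reachable x y := by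
  have hb := (isAcyclic_iff_forall_edge_isBridge.mp hT.IsAcyclic)
    (show s(x,y) ∈ T.edgeSet from hxy)
  exact (isBridge_iff.mp hb)

lemma reach_induce_of_walk {G : SimpleGraph V} {s : Set V} :
    ∀ {u v : V} (p : G.Walk u v), (∀ z ∈ p.support, z ∈ s) →
      ∀ (hu : u ∈ s) (hv : v ∈ s), (G.induce s).Reachable ⟨u, hu⟩ ⟨v, hv⟩ := by
  intro u v p
  induction p with
  | nil => intro _ hu hv; exact Reachable.refl _
  | @cons u w v h p ih =>
    intro hp hu hv
    have hw : w ∈ s := hp w (by simp)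
    have hadj : (G.induce s).Adj ⟨u, hu⟩ ⟨w, hw⟩ := h
    exact hadj.reachable.trans (ih (fun z hz => hp z (by simp [hz])) hw hv)

lemma exists_walk_of_induce_reach {G : SimpleGraph V} {s : Set V} {a b : s}
    (h : (G.induce s).Reachable a b) :
    ∃ p : G.Walk a.1 b.1, ∀ z ∈ p.support, z ∈ s := by
  obtain ⟨p⟩ := h
  induction p with
  | nil => exact ⟨Walk.nil, by simp⟩
  | @cons a c b h p ih =>
    obtain ⟨q, hq⟩ := ih
    refine ⟨Walk.cons (by exact h) q, ?_⟩
    intro z hz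
    change z ∈ a.1 :: q.support at hz
    rw [List.mem_cons] at hz
    rcases hz with rfl | hz
    · exact a.2
    · exact hq z hz

/-- Transfer reachability on one side of a deleted tree edge to reachability in the
graph with a vertex of the other side removed. -/
lemma side_reach_induce {T : SimpleGraph V} (hT : T.IsTree) {x y : V} (hxy : T.Adj x y)
    {c : V} (hc : (T.deleteEdges {s(x,y)}).Reachable x c) {z : V}
    (hz : (T.deleteEdges {s(x,y)}).Reachable y z) :
    ∃ (hy' : y ∈ ({c}ᶜ : Set V)) (hz' : z ∈ ({c}ᶜ : Set V)),
      (T.induce ({c}ᶜ : Set V)).Reachable ⟨y, hy'⟩ ⟨z, hz'⟩ := by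
  classical
  have hnr := not_reach hT hxy
  have hyc : y ∈ ({c}ᶜ : Set V) := fun h => hnr (by
    simp only [Set.mem_singleton_iff] at h
    exact h ▸ hc)
  have hzc : z ∈ ({c}ᶜ : Set V) := fun h => by
    simp only [Set.mem_singleton_iff] at h
    exact hnr (hc.trans (h ▸ hz).symm)
  obtain ⟨p⟩ := hz
  have hcsupp : c ∉ p.support := by
    intro hmem
    exact hnr (hc.trans (Reachable.symm ⟨p.takeUntil c hmem⟩))
  have hsup : ∀ w ∈ p.support, w ∈ ({c}ᶜ : Set V) := by
    intro w hw h
    simp only [Set.mem_singleton_iff] at h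
    exact hcsupp (h ▸ hw)
  have hreach := reach_induce_of_walk p hsup hyc hzc
  have hle : (T.deleteEdges {s(x,y)}).induce ({c}ᶜ : Set V) ≤ T.induce ({c}ᶜ : Set V) := by
    intro a b hab
    simp only [comap_adj] at hab ⊢
    exact deleteEdges_le _ hab
  exact ⟨hyc, hzc, hreach.mono hle⟩

/-- A walk avoiding an endpoint of an edge avoids that edge. -/
lemma reach_delete_of_induce_reach {T : SimpleGraph V} {x y v : V} (hv : v = x ∨ v = y)
    {a b : ({v}ᶜ : Set V)} (h : (T.induce ({v}ᶜ : Set V)).Reachable a b) :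
    (T.deleteEdges {s(x,y)}).Reachable a.1 b.1 := by
  obtain ⟨p, hp⟩ := exists_walk_of_induce_reach h
  refine ⟨p.toDeleteEdges _ ?_⟩
  intro e he hes
  simp only [Set.mem_singleton_iff] at hes
  subst hes
  have hx : x ∈ p.support := p.fst_mem_support_of_mem_edges he
  have hy : y ∈ p.support := p.snd_mem_support_of_mem_edges he
  rcases hv with rfl | rfl
  · exact (hp v hx) rfl
  · exact (hp v hy) rfl

lemma exists_adj_reach {T : SimpleGraph V} (hconn : T.Preconnected) {c : V}
    (d : ({c}ᶜ : Set V)) :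
    ∃ (y : V) (hy : y ∈ ({c}ᶜ : Set V)), T.Adj c y ∧
      (T.induce ({c}ᶜ : Set V)).Reachable d ⟨y, hy⟩ := by
  obtain ⟨p⟩ := hconn d.1 c
  have H : ∀ (u w : V) (_ : T.Walk u w) (hu : u ∈ ({w}ᶜ : Set V)),
      ∃ (y : V) (hy : y ∈ ({w}ᶜ : Set V)), T.Adj w y ∧
        (T.induce ({w}ᶜ : Set V)).Reachable ⟨u, hu⟩ ⟨y, hy⟩ := by
    intro u w p
    induction p with
    | nil => intro hu; exact absurd rfl hu
    | @cons u v w h p ih =>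
      intro hu
      by_cases hvc : v ∈ ({w}ᶜ : Set V)
      · obtain ⟨y, hy, h1, h2⟩ := ih hvc
        have hadj : (T.induce ({w}ᶜ : Set V)).Adj ⟨u, hu⟩ ⟨v, hvc⟩ := h
        exact ⟨y, hy, h1, hadj.reachable.trans h2⟩
      · have hvw : v = w := by
          by_contra hne
          exact hvc (by simpa using hne)
        subst hvw
        exact ⟨u, hu, h.symm, Reachable.refl _⟩
  obtain ⟨y, hy, h1, h2⟩ := H d.1 c p d.2
  exact ⟨y, hy, h1, h2⟩

lemma card_le_card_supp {G : SimpleGraph V} {c : V} (u : ({c}ᶜ : Set V)) (S : Set V)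
    (hS : ∀ z ∈ S, ∃ hz : z ∈ ({c}ᶜ : Set V),
      (G.induce ({c}ᶜ : Set V)).Reachable u ⟨z, hz⟩) :
    Nat.card S ≤ Nat.card ((G.induce ({c}ᶜ : Set V)).connectedComponentMk u).supp := by
  apply Nat.card_le_card_of_injective
    (fun z : S => (⟨⟨z.1, (hS z.1 z.2).choose⟩, by
      rw [ConnectedComponent.mem_supp_iff, ConnectedComponent.eq]
      exact ((hS z.1 z.2).choose_spec).symm⟩ :
      ((G.induce ({c}ᶜ : Set V)).connectedComponentMk u).supp))
  intro a b hab
  exact Subtype.ext (congrArg (fun t => t.1.1) hab)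

lemma le_vertexWeight {G : SimpleGraph V} {c : V} (u : ({c}ᶜ : Set V)) (S : Set V)
    (hS : ∀ z ∈ S, ∃ hz : z ∈ ({c}ᶜ : Set V),
      (G.induce ({c}ᶜ : Set V)).Reachable u ⟨z, hz⟩) :
    Nat.card S ≤ vertexWeight G c :=
  (card_le_card_supp u S hS).trans (card_supp_le_vertexWeight _)

lemma card_comp_le {c : V} (A : Set ({c}ᶜ : Set V)) (S : Set V)
    (h : ∀ a : ({c}ᶜ : Set V), a ∈ A → a.1 ∈ S) : Nat.card A ≤ Nat.card S := by
  apply Nat.card_le_card_of_injective (fun a : A => (⟨a.1.1, h a.1 a.2⟩ : S))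
  intro a b hab
  have hv := Subtype.ext_iff.mp hab
  exact Subtype.ext (Subtype.ext hv)

/-- The side of the deleted edge not containing `c` has size at most `vertexWeight c`. -/
lemma side_card_le_vertexWeight {T : SimpleGraph V} (hT : T.IsTree) {x y : V}
    (hxy : T.Adj x y) {c : V} (hc : (T.deleteEdges {s(x,y)}).Reachable x c) :
    Nat.card ((T.deleteEdges {s(x,y)}).connectedComponentMk y).supp ≤ vertexWeight T c := by
  obtain ⟨hy', _, _⟩ := side_reach_induce hT hxy hc (Reachable.refl y)
  apply le_vertexWeight (⟨y, hy'⟩ : ({c}ᶜ : Set V))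
  intro z hzS
  have hz : (T.deleteEdges {s(x,y)}).Reachable y z := by
    rw [ConnectedComponent.mem_supp_iff, ConnectedComponent.eq] at hzS
    exact hzS.symm
  obtain ⟨_, hz', hr⟩ := side_reach_induce hT hxy hc hz
  exact ⟨hz', hr⟩

end Stmt14Aux
/-- Some edge incident to a centroid achieves the maximal value of `min θ_T({e})` over all
edges of the tree. -/
theorem stmt14 {V : Type*} [Fintype V] (T : SimpleGraph V) (hT : T.IsTree)
    (hn : 2 ≤ Fintype.card V) :
    ∃ e ∈ T.edgeSet, (∃ c : V, IsCentroid T c ∧ c ∈ e) ∧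
      ∀ f ∈ T.edgeSet,
        sInf {x : ℕ | x ∈ theta T {f}} ≤ sInf {x : ℕ | x ∈ theta T {e}} := by
  classical
  open Stmt14Aux in
  have hpre : T.Preconnected := hT.isConnected.preconnected
  haveI : Nontrivial V := Fintype.one_lt_card_iff_nontrivial.mp (lt_of_lt_of_le one_lt_two hn)
  obtain ⟨c, hc⟩ := Finite.exists_min (vertexWeight T)
  obtain ⟨d, hd⟩ := exists_ne c
  have hdmem : d ∈ ({c}ᶜ : Set V) := by simpa using hd
  haveI hne : Nonempty ((T.induce ({c}ᶜ : Set V)).ConnectedComponent) :=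
    ⟨(T.induce ({c}ᶜ : Set V)).connectedComponentMk ⟨d, hdmem⟩⟩
  obtain ⟨D, hD⟩ := Stmt14Aux.exists_comp_vertexWeight hne
  set w := vertexWeight T c with hw
  obtain ⟨dd, hdd⟩ := D.exists_rep
  obtain ⟨y, hy, hcy, hdy⟩ := Stmt14Aux.exists_adj_reach hpre dd
  have hDy : D = (T.induce ({c}ᶜ : Set V)).connectedComponentMk ⟨y, hy⟩ := by
    rw [← hdd]
    exact ConnectedComponent.eq.mpr hdy
  set G' := T.deleteEdges {s(c,y)} with hG'
  set B := (G'.connectedComponentMk y).supp with hBdef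
  set A := (G'.connectedComponentMk c).supp with hAdef
  have hnr : ¬ G'.Reachable c y := Stmt14Aux.not_reach hT hcy
  -- membership characterizations
  have hmemB : ∀ z : V, z ∈ B ↔ G'.Reachable y z := by
    intro z
    rw [hBdef, ConnectedComponent.mem_supp_iff, ConnectedComponent.eq]
    exact ⟨Reachable.symm, Reachable.symm⟩
  have hmemA : ∀ z : V, z ∈ A ↔ G'.Reachable c z := by
    intro z
    rw [hAdef, ConnectedComponent.mem_supp_iff, ConnectedComponent.eq]
    exact ⟨Reachable.symm, Reachable.symm⟩
  -- card B = w
  have hcardB : Nat.card B = w := by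
    apply le_antisymm
    · have h1 : Nat.card B ≤
          Nat.card ((T.induce ({c}ᶜ : Set V)).connectedComponentMk ⟨y, hy⟩).supp := by
        apply Stmt14Aux.card_le_card_supp
        intro z hzB
        obtain ⟨hy', hz', hr⟩ :=
          Stmt14Aux.side_reach_induce hT hcy (Reachable.refl c) ((hmemB z).mp hzB)
        exact ⟨hz', hr⟩
      rwa [← hDy, hD] at h1
    · have h2 : Nat.card D.supp ≤ Nat.card B := by
        apply Stmt14Aux.card_comp_le
        intro a ha
        rw [ConnectedComponent.mem_supp_iff, hDy, ConnectedComponent.eq] at ha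
        have hr : (T.deleteEdges {s(c,y)}).Reachable y a.1 :=
          Stmt14Aux.reach_delete_of_induce_reach (Or.inl rfl) ha.symm
        exact (hmemB a.1).mpr hr
      rwa [hD] at h2
  -- partition
  have hdisj : Disjoint A B := by
    rw [Set.disjoint_left]
    intro z hzA hzB
    exact hnr (((hmemA z).mp hzA).trans ((hmemB z).mp hzB).symm)
  have hcover : A ∪ B = Set.univ := by
    ext z
    simp only [Set.mem_union, Set.mem_univ, iff_true]
    rcases Stmt14Aux.cover hpre c y z with h | h
    · exact Or.inl ((hmemA z).mpr h)
    · exact Or.inr ((hmemB z).mpr h)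
  have hsum : Nat.card A + Nat.card B = Fintype.card V := by
    rw [Nat.card_coe_set_eq, Nat.card_coe_set_eq]
    rw [← Set.ncard_union_eq hdisj (Set.toFinite A) (Set.toFinite B), hcover, Set.ncard_univ,
      Nat.card_eq_fintype_card]
  have hwpos : 1 ≤ w := by
    rw [← hcardB]
    have : Nonempty B := ⟨⟨y, (hmemB y).mpr (Reachable.refl y)⟩⟩
    exact Nat.card_pos
  -- w ≤ card A
  have hwA : w ≤ Nat.card A := by
    by_contra hlt
    push_neg at hlt
    have hylt : vertexWeight T y ≤ w - 1 := by
      apply Stmt14Aux.vertexWeight_le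
      intro D'
      obtain ⟨z, hz⟩ := D'.exists_rep
      have hzy : z.1 ≠ y := fun h => z.2 (Set.mem_singleton_iff.mpr h)
      rcases Stmt14Aux.cover hpre c y z.1 with hcz | hyz
      · have h1 : Nat.card D'.supp ≤ Nat.card A := by
          apply Stmt14Aux.card_comp_le
          intro a ha
          rw [ConnectedComponent.mem_supp_iff, ← hz] at ha
          have ha' : (T.induce ({y}ᶜ : Set V)).Reachable a z :=
            ConnectedComponent.eq.mp (by exact ha)
          have hr : (T.deleteEdges {s(c,y)}).Reachable z.1 a.1 :=
            Stmt14Aux.reach_delete_of_induce_reach (Or.inr rfl) ha'.symm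
          exact (hmemA a.1).mpr (hcz.trans hr)
        omega
      · have h1 : Nat.card D'.supp ≤ Nat.card (B \ {y} : Set V) := by
          apply Stmt14Aux.card_comp_le
          intro a ha
          rw [ConnectedComponent.mem_supp_iff, ← hz] at ha
          have ha' : (T.induce ({y}ᶜ : Set V)).Reachable a z :=
            ConnectedComponent.eq.mp (by exact ha)
          have hr : (T.deleteEdges {s(c,y)}).Reachable z.1 a.1 :=
            Stmt14Aux.reach_delete_of_induce_reach (Or.inr rfl) ha'.symm
          have hay : a.1 ≠ y := fun h => a.2 (Set.mem_singleton_iff.mpr h)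
          exact ⟨(hmemB a.1).mpr (hyz.trans hr), by simpa using hay⟩
        have h2 : Nat.card (B \ {y} : Set V) = w - 1 := by
          rw [Nat.card_coe_set_eq, Set.ncard_diff_singleton_of_mem
            ((hmemB y).mpr (Reachable.refl y))]
          rw [← Nat.card_coe_set_eq, hcardB]
        omega
    have := hc y
    omega
  -- components of G' are mk c and mk y
  have hcomp : ∀ D0 : G'.ConnectedComponent,
      D0 = G'.connectedComponentMk c ∨ D0 = G'.connectedComponentMk y := by
    intro D0
    obtain ⟨z, hz⟩ := D0.exists_rep
    rcases Stmt14Aux.cover hpre c y z with h | h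
    · exact Or.inl (by rw [← hz]; exact (ConnectedComponent.eq.mpr h).symm)
    · exact Or.inr (by rw [← hz]; exact (ConnectedComponent.eq.mpr h).symm)
  refine ⟨s(c, y), hcy, ⟨c, hc, by simp⟩, ?_⟩
  -- lower bound on sInf theta e
  have hθe : ∀ m ∈ {x : ℕ | x ∈ theta T {s(c,y)}}, w ≤ m := by
    intro m hm
    simp only [Set.mem_setOf_eq, theta, Finset.coe_singleton] at hm
    rw [Stmt14Aux.mem_compSizes] at hm
    obtain ⟨D0, hD0⟩ := hm
    rcases hcomp D0 with rfl | rfl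
    · rw [← hD0]
      exact hwA
    · rw [← hD0, hcardB]
  have hene : w ∈ {x : ℕ | x ∈ theta T {s(c,y)}} := by
    simp only [Set.mem_setOf_eq, theta, Finset.coe_singleton]
    rw [Stmt14Aux.mem_compSizes]
    exact ⟨G'.connectedComponentMk y, hcardB⟩
  have hle : w ≤ sInf {x : ℕ | x ∈ theta T {s(c,y)}} := le_csInf ⟨w, hene⟩ hθe
  -- upper bound for every edge
  intro f hf
  refine le_trans ?_ hle
  induction f with
  | _ x y' =>
    rw [mem_edgeSet] at hf
    have key : ∀ (x₀ y₀ : V), T.Adj x₀ y₀ →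
        (T.deleteEdges {s(x₀,y₀)}).Reachable x₀ c →
        sInf {m : ℕ | m ∈ theta T {s(x₀,y₀)}} ≤ w := by
      intro x₀ y₀ hadj hreach
      have hmem : Nat.card ((T.deleteEdges {s(x₀,y₀)}).connectedComponentMk y₀).supp ∈
          {m : ℕ | m ∈ theta T {s(x₀,y₀)}} := by
        simp only [Set.mem_setOf_eq, theta, Finset.coe_singleton]
        rw [Stmt14Aux.mem_compSizes]
        exact ⟨_, rfl⟩
      exact le_trans (Nat.sInf_le hmem)
        (Stmt14Aux.side_card_le_vertexWeight hT hadj hreach)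
    rcases Stmt14Aux.cover hpre x y' c with h | h
    · exact key x y' hf h
    · rw [show s(x,y') = s(y',x) from Sym2.eq_swap] at h ⊢
      exact key y' x hf.symm h
end
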